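/- Let β, x₁,…,x_d, b₁, b₂,… be independent indeterminates and work in the ring of formal power series over ℤ in these variables. Let a = (a₁,…,a_d) ∈ ℤ^d with a_i + d - i ≥ 0 for every i. Define the d×d matrices H := ( Σ_{s≥0} C(i-d, s) β^s G^{(a_i+d-i)}_{a_i+j-i+s} )_{1≤i,j≤d} and M := ( (-1)^{d-i} e_{d-i}^{(j)}(x) )_{1≤i,j≤d}, where e_p^{(j)}(x) is the p-th elementary symmetric polynomial in x₁,…,x_d with x_j omitted, and C(n,s) is the generalized binomial coefficient given by (1+x)^n = Σ_{s≥0} C(n,s)x^s. Then the (i,j)-entry of the product HM equals [x_j|b]^{a_i+d-i} · (1+βx_j)^{i-d-1} · ∏_{t=1}^{d} (1+βx_t). -/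

import Mathlib

open scoped BigOperators

namespace GrothDet

/-- Index type for the indeterminates: `β`, `x₁,…,x_d`, `b₁,b₂,…`. -/
abbrev Idx (d : ℕ) := Unit ⊕ Fin d ⊕ ℕ

/-- The ambient ring: formal power series over `ℤ` in `β`, the `xᵢ` and the `bⱼ`. -/
abbrev R (d : ℕ) := MvPowerSeries (Idx d) ℤ

noncomputable def β (d : ℕ) : R d := MvPowerSeries.X (Sum.inl ())
noncomputable def x (d : ℕ) (i : Fin d) : R d := MvPowerSeries.X (Sum.inr (Sum.inl i))
noncomputable def b (d : ℕ) (ℓ : ℕ) : R d := MvPowerSeries.X (Sum.inr (Sum.inr ℓ))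

/-- `x ⊕ y := x + y + βxy`. -/
noncomputable def oplus (d : ℕ) (u v : R d) : R d := u + v + β d * u * v

/-- `[y|b]^k := (y ⊕ b₁)⋯(y ⊕ b_k)`. -/
noncomputable def fb (d : ℕ) (y : R d) (k : ℕ) : R d :=
  ∏ ℓ ∈ Finset.range k, oplus d y (b d ℓ)

/-- The multiplicative inverse of `1 + β * x j` (a unit since its constant term is `1`). -/
noncomputable def invOneAdd (d : ℕ) (j : Fin d) : R d :=
  MvPowerSeries.invOfUnit (1 + β d * x d j) 1

/-- `F^{(k)}(u) = ∏ᵢ (1+βxᵢ)/(1-xᵢu) · ∏_{ℓ=1}^k (1+(u+β)b_ℓ)` as a power series in `u`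
over `R d`; here `(1-xᵢu)⁻¹ = ∑_n xᵢⁿ uⁿ`. -/
noncomputable def F (d : ℕ) (k : ℕ) : PowerSeries (R d) :=
  (∏ i : Fin d,
      PowerSeries.C (1 + β d * x d i) * PowerSeries.mk fun n => x d i ^ n) *
    ∏ ℓ ∈ Finset.range k,
      (1 + (PowerSeries.X + PowerSeries.C (β d)) * PowerSeries.C (b d ℓ))

/-- `[u^t] F^{(k)}(u)`, extended by `0` in negative degrees `t`. -/
noncomputable def Fcoeff (d : ℕ) (k : ℕ) (t : ℤ) : R d :=
  if 0 ≤ t then PowerSeries.coeff t.toNat (F d k) else 0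

/-- The sum `∑_{s≥0} f s` of a family of power series such that `β^s ∣ f s`:
it is defined coefficientwise; on the coefficient of a monomial `n` only the
(finitely many) terms with `s ≤ n(β)` contribute, and the value is the limit of the
partial sums in the formal power series topology. -/
noncomputable def seriesSum (d : ℕ) (f : ℕ → R d) : R d :=
  (fun n => ∑ s ∈ Finset.range (n (Sum.inl ()) + 1), MvPowerSeries.coeff n (f s) :
    (Idx d →₀ ℕ) → ℤ)

/-- `G^{(k)}_m = ∑_{s≥0} (-β)^s [u^{m+s}] F^{(k)}(u)`. -/
noncomputable def G (d : ℕ) (k : ℕ) (m : ℤ) : R d :=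
  seriesSum d fun s => (-β d) ^ s * Fcoeff d k (m + s)

/-- The `p`-th elementary symmetric function of the family `f` restricted to `S`. -/
noncomputable def esym (d : ℕ) (S : Finset (Fin d)) (p : ℕ) (f : Fin d → R d) : R d :=
  ∑ t ∈ S.powersetCard p, ∏ i ∈ t, f i

/-- `x_i/(1+βx_i) = -x̄_i`. -/
noncomputable def xbar (d : ℕ) (i : Fin d) : R d := x d i * invOneAdd d i


section Tools
variable {d : ℕ}

lemma coeff_seriesSum (f : ℕ → R d) (n : Idx d →₀ ℕ) :
    MvPowerSeries.coeff n (seriesSum d f)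
      = ∑ s ∈ Finset.range (n (Sum.inl ()) + 1), MvPowerSeries.coeff n (f s) := rfl

lemma beta_pow_dvd_iff {N : ℕ} {z : R d} :
    β d ^ N ∣ z ↔ ∀ n : Idx d →₀ ℕ, n (Sum.inl ()) < N → MvPowerSeries.coeff n z = 0 :=
  MvPowerSeries.X_pow_dvd_iff

lemma eq_of_forall_beta_pow_dvd {y z : R d} (h : ∀ N, β d ^ N ∣ y - z) : y = z := by
  ext n
  have := (beta_pow_dvd_iff.mp (h (n (Sum.inl ()) + 1))) n (Nat.lt_succ_self _)
  rw [map_sub, sub_eq_zero] at this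
  exact this

lemma seriesSum_sub_partial {f : ℕ → R d} (hf : ∀ s, β d ^ s ∣ f s) (N : ℕ) :
    β d ^ N ∣ seriesSum d f - ∑ s ∈ Finset.range N, f s := by
  rw [beta_pow_dvd_iff]
  intro n hn
  rw [map_sub, coeff_seriesSum, map_sum]
  have hsub : Finset.range (n (Sum.inl ()) + 1) ⊆ Finset.range N := by
    exact Finset.range_subset_range.2 hn
  rw [Finset.sum_subset hsub, sub_self]
  intro s hs hs'
  have : n (Sum.inl ()) < s := by
    simp only [Finset.mem_range, not_lt] at hs' ⊢
    omega
  exact (beta_pow_dvd_iff.mp (hf s)) n this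

lemma seriesSum_eq {f : ℕ → R d} {y : R d} (hf : ∀ s, β d ^ s ∣ f s)
    (hy : ∀ N, β d ^ N ∣ y - ∑ s ∈ Finset.range N, f s) : seriesSum d f = y := by
  refine eq_of_forall_beta_pow_dvd fun N => ?_
  have h1 := seriesSum_sub_partial hf N
  have h2 := hy N
  have : seriesSum d f - y
      = (seriesSum d f - ∑ s ∈ Finset.range N, f s) - (y - ∑ s ∈ Finset.range N, f s) := by
    ring
  rw [this]
  exact dvd_sub h1 h2

lemma seriesSum_mul_const {f : ℕ → R d} (hf : ∀ s, β d ^ s ∣ f s) (c : R d) :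
    seriesSum d f * c = seriesSum d (fun s => f s * c) := by
  refine (seriesSum_eq (fun s => (hf s).mul_right c) fun N => ?_).symm
  rw [← Finset.sum_mul, ← sub_mul]
  exact (seriesSum_sub_partial hf N).mul_right c

lemma sum_seriesSum {ι : Type*} (P : Finset ι) (f : ι → ℕ → R d)
    (hf : ∀ p s, β d ^ s ∣ f p s) :
    ∑ p ∈ P, seriesSum d (f p) = seriesSum d (fun s => ∑ p ∈ P, f p s) := by
  refine (seriesSum_eq (fun s => Finset.dvd_sum fun p _ => hf p s) fun N => ?_).symm
  rw [Finset.sum_comm]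
  rw [← Finset.sum_sub_distrib]
  exact Finset.dvd_sum fun p _ => seriesSum_sub_partial (hf p) N

lemma seriesSum_single (c : R d) :
    seriesSum d (fun s => if s = 0 then c else 0) = c := by
  refine seriesSum_eq (fun s => ?_) (fun N => ?_)
  · rcases s with _ | s
    · simp
    · simp
  · rcases N with _ | N
    · simp
    · rw [Finset.sum_ite_eq' (Finset.range (N + 1)) 0 (fun _ => c)]
      simp

lemma seriesSum_mul_oneAdd {f g : ℕ → R d} {w : R d} (hf : ∀ s, β d ^ s ∣ f s)
    (hw : β d ∣ w) (h0 : g 0 = f 0) (hs : ∀ s, g (s + 1) = f (s + 1) + f s * w) :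
    seriesSum d g = seriesSum d f * (1 + w) := by
  have hg : ∀ s, β d ^ s ∣ g s := by
    intro s
    rcases s with _ | s
    · simp
    · rw [hs]
      refine dvd_add (hf _) ?_
      rw [pow_succ]
      exact mul_dvd_mul (hf s) hw
  refine seriesSum_eq hg fun N => ?_
  rcases N with _ | N
  · simp
  have hpart : ∑ s ∈ Finset.range (N + 1), g s
      = ∑ s ∈ Finset.range (N + 1), f s + (∑ s ∈ Finset.range N, f s) * w := by
    rw [Finset.sum_range_succ', Finset.sum_range_succ']
    simp only [hs, h0]
    rw [Finset.sum_add_distrib, Finset.sum_mul]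
    ring
  rw [hpart]
  have : seriesSum d f * (1 + w) - (∑ s ∈ Finset.range (N + 1), f s
        + (∑ s ∈ Finset.range N, f s) * w)
      = (seriesSum d f - ∑ s ∈ Finset.range (N + 1), f s)
        + (seriesSum d f - ∑ s ∈ Finset.range N, f s) * w := by
    ring
  rw [this]
  refine dvd_add (seriesSum_sub_partial hf _) ?_
  rw [pow_succ]
  exact mul_dvd_mul (seriesSum_sub_partial hf N) hw

end Tools

section Tools2
variable {d : ℕ}

lemma constantCoeff_one_add (j : Fin d) :
    MvPowerSeries.constantCoeff (1 + β d * x d j) = 1 := by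
  simp [β, x]

lemma mul_invOneAdd (j : Fin d) : (1 + β d * x d j) * invOneAdd d j = 1 := by
  refine MvPowerSeries.mul_invOfUnit _ 1 ?_
  simpa using constantCoeff_one_add j

lemma eq_invOneAdd_of {j : Fin d} {y : R d} (h : y * (1 + β d * x d j) = 1) :
    y = invOneAdd d j := by
  have := congrArg (· * invOneAdd d j) h
  simpa [mul_assoc, mul_invOneAdd j] using this

lemma beta_pow_dvd_geom (j : Fin d) (r : ℕ) : β d ^ r ∣ (-(β d * x d j)) ^ r := by
  rw [neg_pow, mul_pow]
  exact Dvd.dvd.mul_left (dvd_mul_right _ _) _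

lemma seriesSum_geom (j : Fin d) :
    seriesSum d (fun r => (-(β d * x d j)) ^ r) = invOneAdd d j := by
  refine eq_invOneAdd_of ?_
  have h := seriesSum_mul_oneAdd (f := fun r => (-(β d * x d j)) ^ r)
    (g := fun s => if s = 0 then (1 : R d) else 0) (w := β d * x d j)
    (beta_pow_dvd_geom j) (dvd_mul_right _ _) (by simp) ?_
  · rw [← h, seriesSum_single]
  · intro s
    simp only [if_neg (Nat.succ_ne_zero s)]
    rw [pow_succ]
    ring

lemma beta_pow_dvd_choose (j : Fin d) (c : ℤ) (s : ℕ) :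
    β d ^ s ∣ c • (β d * x d j) ^ s := by
  rw [zsmul_eq_mul, mul_pow]
  exact Dvd.dvd.mul_left (Dvd.dvd.mul_right (dvd_refl _) _) _

lemma seriesSum_choose (j : Fin d) (n : ℕ) :
    seriesSum d (fun s => Ring.choose (-(n : ℤ)) s • (β d * x d j) ^ s)
      = invOneAdd d j ^ n := by
  induction n with
  | zero =>
      have : (fun s => Ring.choose (-(0 : ℕ) : ℤ) s • (β d * x d j) ^ s)
          = fun s => if s = 0 then (1 : R d) else 0 := by
        funext s
        rcases s with _ | s
        · simp [Ring.choose_zero_right]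
        · have : Ring.choose ((0 : ℤ)) (s + 1) = 0 := by
            have := Ring.choose_natCast (R := ℤ) 0 (s + 1)
            simpa using this
          simp [this]
      rw [this, seriesSum_single]
      simp
  | succ n ih =>
      have h := seriesSum_mul_oneAdd
        (f := fun s => Ring.choose (-((n : ℤ) + 1)) s • (β d * x d j) ^ s)
        (g := fun s => Ring.choose (-(n : ℤ)) s • (β d * x d j) ^ s)
        (w := β d * x d j)
        (fun s => beta_pow_dvd_choose j _ s) (dvd_mul_right _ _) (by simp [Ring.choose_zero_right]) ?_
      · -- h : seriesSum g = seriesSum f * (1 + βx)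
        have hf : seriesSum d (fun s => Ring.choose (-((n : ℕ) + 1 : ℤ)) s • (β d * x d j) ^ s)
            * (1 + β d * x d j) = invOneAdd d j ^ n := by
          rw [← ih, ← h]
        have := congrArg (· * invOneAdd d j) hf
        simp only [mul_assoc, mul_invOneAdd j, mul_one] at this
        have hcast : (-((n : ℕ) + 1 : ℤ)) = (-((n + 1 : ℕ) : ℤ)) := by push_cast; ring
        rw [hcast] at this
        rw [this, pow_succ]
      · intro s
        have pas := Ring.choose_succ_succ (R := ℤ) (-((n : ℤ) + 1)) s
        have : Ring.choose (-(n : ℤ)) (s + 1)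
            = Ring.choose (-((n : ℤ) + 1)) s + Ring.choose (-((n : ℤ) + 1)) (s + 1) := by
          have e : (-((n : ℤ) + 1)) + 1 = -(n : ℤ) := by ring
          rw [← e]; exact pas
        rw [this, add_smul, smul_mul_assoc, ← pow_succ]
        ring

end Tools2

section PS
variable {d : ℕ}
open PowerSeries

noncomputable def geo (d : ℕ) (y : R d) : PowerSeries (R d) := PowerSeries.mk fun n => y ^ n

noncomputable def Pk (d k : ℕ) : PowerSeries (R d) :=
  ∏ ℓ ∈ Finset.range k,
    (1 + (PowerSeries.X + PowerSeries.C (β d)) * PowerSeries.C (b d ℓ))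

lemma geo_rec (y : R d) : geo d y = 1 + PowerSeries.C y * (PowerSeries.X * geo d y) := by
  ext n
  rcases n with _ | n
  · simp [geo]
  · simp [geo, PowerSeries.coeff_succ_X_mul, coeff_one, pow_succ, mul_comm]

lemma geo_mul_cancel (y : R d) : geo d y * (1 - PowerSeries.C y * PowerSeries.X) = 1 := by
  ext n
  rcases n with _ | n
  · simp [geo]
  · rw [mul_sub, mul_one, map_sub]
    have : geo d y * (PowerSeries.C y * PowerSeries.X)
        = PowerSeries.C y * (PowerSeries.X * geo d y) := by ring
    rw [this, PowerSeries.coeff_C_mul, PowerSeries.coeff_succ_X_mul]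
    simp [geo, coeff_one, pow_succ, mul_comm]

lemma geo_shift (y : R d) (Q : PowerSeries (R d)) (n : ℕ) :
    PowerSeries.coeff (n + 1) (geo d y * Q)
      = y * PowerSeries.coeff n (geo d y * Q) + PowerSeries.coeff (n + 1) Q := by
  conv_lhs => rw [geo_rec y]
  rw [add_mul, one_mul, map_add]
  have : PowerSeries.C y * (PowerSeries.X * geo d y) * Q
      = PowerSeries.C y * (PowerSeries.X * (geo d y * Q)) := by ring
  rw [this, PowerSeries.coeff_C_mul, PowerSeries.coeff_succ_X_mul]
  ring

lemma Pk_deg (k : ℕ) : ∀ r, k < r → PowerSeries.coeff r (Pk d k) = 0 := by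
  induction k with
  | zero =>
      intro r hr
      rcases r with _ | r
      · omega
      · simp [Pk, coeff_one]
  | succ k ih =>
      intro r hr
      rw [Pk, Finset.prod_range_succ, ← Pk]
      rw [mul_add, mul_one, map_add]
      have h1 : PowerSeries.coeff r (Pk d k) = 0 := ih r (by omega)
      have : Pk d k * ((PowerSeries.X + PowerSeries.C (β d)) * PowerSeries.C (b d k))
          = PowerSeries.C (b d k) * (PowerSeries.X * Pk d k)
            + PowerSeries.C (β d * b d k) * Pk d k := by
        rw [map_mul]; ring
      rw [this, map_add, PowerSeries.coeff_C_mul, PowerSeries.coeff_C_mul, h1]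
      rcases r with _ | r
      · omega
      · rw [PowerSeries.coeff_succ_X_mul, ih r (by omega)]
        ring

lemma coeff_geo_Pk_shift (y : R d) (k t : ℕ) :
    PowerSeries.coeff (k + t) (geo d y * Pk d k)
      = y ^ t * PowerSeries.coeff k (geo d y * Pk d k) := by
  induction t with
  | zero => simp
  | succ t ih =>
      have : k + (t + 1) = (k + t) + 1 := by omega
      rw [this, geo_shift, ih, Pk_deg k (k + t + 1) (by omega), pow_succ]
      ring

lemma coeff_geo_Pk (y : R d) (k : ℕ) :
    PowerSeries.coeff k (geo d y * Pk d k) = fb d y k := by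
  induction k with
  | zero => simp [Pk, fb, geo]
  | succ k ih =>
      rw [Pk, Finset.prod_range_succ, ← Pk]
      have expand : geo d y * (Pk d k
            * (1 + (PowerSeries.X + PowerSeries.C (β d)) * PowerSeries.C (b d k)))
          = geo d y * Pk d k
            + PowerSeries.C (b d k) * (PowerSeries.X * (geo d y * Pk d k))
            + PowerSeries.C (β d * b d k) * (geo d y * Pk d k) := by
        rw [map_mul]; ring
      rw [expand, map_add, map_add, PowerSeries.coeff_C_mul, PowerSeries.coeff_C_mul,
        PowerSeries.coeff_succ_X_mul]
      have h1 : PowerSeries.coeff (k + 1) (geo d y * Pk d k)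
          = y * PowerSeries.coeff k (geo d y * Pk d k) := by
        have := coeff_geo_Pk_shift y k 1
        simpa using this
      rw [h1, ih]
      simp only [fb, Finset.prod_range_succ, oplus]
      ring

end PS

section PS2
open PowerSeries
variable {d : ℕ}

noncomputable def W (d : ℕ) (j : Fin d) : PowerSeries (R d) :=
  ∏ t ∈ Finset.univ \ {j}, (1 - PowerSeries.C (x d t) * PowerSeries.X)

noncomputable def wq (d : ℕ) (j : Fin d) (q : ℕ) : R d :=
  (-1 : R d) ^ q * esym d (Finset.univ \ {j}) q (x d)

lemma W_eq (j : Fin d) :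
    W d j = ∑ q ∈ Finset.range d, PowerSeries.C (wq d j q) * PowerSeries.X ^ q := by
  have card_S : (Finset.univ \ {j} : Finset (Fin d)).card = d - 1 := by
    rw [← Finset.erase_eq, Finset.card_erase_of_mem (Finset.mem_univ j), Finset.card_univ,
      Fintype.card_fin]
  have step1 : W d j = ∑ T ∈ (Finset.univ \ {j} : Finset (Fin d)).powerset,
      ∏ t ∈ T, (-(PowerSeries.C (x d t) * PowerSeries.X)) := by
    unfold W
    have : ∀ t : Fin d, (1 : PowerSeries (R d)) - PowerSeries.C (x d t) * PowerSeries.X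
        = (-(PowerSeries.C (x d t) * PowerSeries.X)) + 1 := by
      intro t; ring
    simp_rw [this]
    rw [Finset.prod_add]
    simp
  have step2 : ∀ T : Finset (Fin d),
      ∏ t ∈ T, (-(PowerSeries.C (x d t) * PowerSeries.X))
        = PowerSeries.C ((-1 : R d) ^ T.card * ∏ t ∈ T, x d t)
            * PowerSeries.X ^ T.card := by
    intro T
    have h : ∀ t ∈ T, -(PowerSeries.C (x d t) * PowerSeries.X)
        = PowerSeries.C ((-1) * x d t) * PowerSeries.X := by
      intro t _
      rw [map_mul]
      simp
    rw [Finset.prod_congr rfl h, Finset.prod_mul_distrib, Finset.prod_const, ← map_prod,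
      Finset.prod_mul_distrib, Finset.prod_const]
  rw [step1]
  simp_rw [step2]
  rw [Finset.sum_powerset, card_S]
  have hd : d - 1 + 1 = d := by
    have : 0 < d := j.pos
    omega
  rw [hd]
  refine Finset.sum_congr rfl fun q _ => ?_
  rw [Finset.sum_congr rfl (fun T hT => by
    rw [(Finset.mem_powersetCard.1 hT).2]), ← Finset.sum_mul, ← map_sum]
  rw [wq, esym, Finset.mul_sum]

lemma geo_is_mk (i : Fin d) : (PowerSeries.mk fun n => x d i ^ n) = geo d (x d i) := rfl

lemma FW_eq (k : ℕ) (j : Fin d) :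
    F d k * W d j
      = PowerSeries.C (∏ t : Fin d, (1 + β d * x d t)) * (geo d (x d j) * Pk d k) := by
  unfold F
  simp_rw [geo_is_mk]
  rw [show (∏ ℓ ∈ Finset.range k,
      (1 + (PowerSeries.X + PowerSeries.C (β d)) * PowerSeries.C (b d ℓ)))
      = Pk d k from rfl]
  rw [Finset.prod_mul_distrib, ← map_prod]
  have hgeo : (∏ i : Fin d, geo d (x d i)) * W d j = geo d (x d j) := by
    rw [← Finset.mul_prod_erase Finset.univ _ (Finset.mem_univ j)]
    unfold W
    rw [← Finset.erase_eq]
    rw [mul_assoc, ← Finset.prod_mul_distrib]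
    rw [Finset.prod_congr rfl fun t _ => geo_mul_cancel (x d t)]
    simp
  calc PowerSeries.C (∏ t : Fin d, (1 + β d * x d t))
        * (∏ i : Fin d, geo d (x d i)) * Pk d k * W d j
      = PowerSeries.C (∏ t : Fin d, (1 + β d * x d t))
        * ((∏ i : Fin d, geo d (x d i)) * W d j) * Pk d k := by ring
    _ = _ := by rw [hgeo]; ring

lemma coeff_F_Xpow (k q K : ℕ) :
    PowerSeries.coeff K (F d k * PowerSeries.X ^ q) = Fcoeff d k ((K : ℤ) - q) := by
  rw [PowerSeries.coeff_mul_X_pow']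
  unfold Fcoeff
  by_cases h : q ≤ K
  · rw [if_pos h, if_pos (by omega : (0:ℤ) ≤ (K:ℤ) - q)]
    have h2 : ((K:ℤ) - q).toNat = K - q := by omega
    rw [h2]
  · rw [if_neg h, if_neg (by omega : ¬ (0:ℤ) ≤ (K:ℤ) - q)]

lemma key_row (k t : ℕ) (j : Fin d) :
    ∑ q ∈ Finset.range d, wq d j q * Fcoeff d k ((k + t : ℕ) - (q : ℤ))
      = (∏ t : Fin d, (1 + β d * x d t)) * (x d j ^ t * fb d (x d j) k) := by
  have h1 : PowerSeries.coeff (k + t) (F d k * W d j)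
      = ∑ q ∈ Finset.range d, wq d j q * Fcoeff d k ((k + t : ℕ) - (q : ℤ)) := by
    rw [W_eq, Finset.mul_sum, map_sum]
    refine Finset.sum_congr rfl fun q _ => ?_
    rw [show F d k * (PowerSeries.C (wq d j q) * PowerSeries.X ^ q)
        = PowerSeries.C (wq d j q) * (F d k * PowerSeries.X ^ q) from by ring]
    rw [PowerSeries.coeff_C_mul, coeff_F_Xpow]
  have h2 : PowerSeries.coeff (k + t) (F d k * W d j)
      = (∏ t : Fin d, (1 + β d * x d t)) * (x d j ^ t * fb d (x d j) k) := by
    rw [FW_eq, PowerSeries.coeff_C_mul, coeff_geo_Pk_shift, coeff_geo_Pk]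
  rw [← h1, h2]

end PS2


section Row
variable {d : ℕ}

lemma beta_pow_dvd_smul (c : ℤ) (y : R d) (s : ℕ) : β d ^ s ∣ c • (β d ^ s * y) :=
  ⟨c • y, by rw [zsmul_eq_mul, zsmul_eq_mul]; ring⟩

lemma beta_pow_dvd_negpow_mul (r : ℕ) (y : R d) : β d ^ r ∣ (-β d) ^ r * y :=
  ⟨(-1) ^ r * y, by ring⟩

lemma row_G (k s : ℕ) (j : Fin d) (m : Fin d → ℤ)
    (hm : ∀ p : Fin d, m p = ((k + (s + 0) : ℕ) : ℤ) - ((d - 1 - (p : ℕ) : ℕ) : ℤ) + 0 - s + s) :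
    ∑ p : Fin d, G d k (m p) *
        ((-1 : R d) ^ (d - 1 - (p : ℕ)) * esym d (Finset.univ \ {j}) (d - 1 - (p : ℕ)) (x d))
      = invOneAdd d j * (x d j ^ s *
          ((∏ t : Fin d, (1 + β d * x d t)) * fb d (x d j) k)) := by
  have hm' : ∀ p : Fin d, m p = ((k : ℤ) + s) - ((d - 1 - (p : ℕ) : ℕ) : ℤ) := by
    intro p
    have := hm p
    push_cast at this ⊢
    omega
  unfold G
  have t1 : ∀ p : Fin d,
      seriesSum d (fun r => (-β d) ^ r * Fcoeff d k (m p + r)) *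
        ((-1 : R d) ^ (d - 1 - (p : ℕ)) * esym d (Finset.univ \ {j}) (d - 1 - (p : ℕ)) (x d))
      = seriesSum d (fun r => ((-β d) ^ r * Fcoeff d k (m p + r)) *
          ((-1 : R d) ^ (d - 1 - (p : ℕ)) * esym d (Finset.univ \ {j}) (d - 1 - (p : ℕ)) (x d))) :=
    fun p => seriesSum_mul_const (fun r => beta_pow_dvd_negpow_mul _ _) _
  rw [Finset.sum_congr rfl fun p _ => t1 p]
  rw [sum_seriesSum _ _ (fun p r => (beta_pow_dvd_negpow_mul _ _).mul_right _)]
  have t2 : (fun r : ℕ => ∑ p : Fin d, ((-β d) ^ r * Fcoeff d k (m p + (r : ℤ))) *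
        ((-1 : R d) ^ (d - 1 - (p : ℕ)) * esym d (Finset.univ \ {j}) (d - 1 - (p : ℕ)) (x d)))
      = fun r : ℕ => (-(β d * x d j)) ^ r *
          (x d j ^ s * ((∏ t : Fin d, (1 + β d * x d t)) * fb d (x d j) k)) := by
    funext r
    have hsum : ∑ p : Fin d, ((-β d) ^ r * Fcoeff d k (m p + (r : ℤ))) *
          ((-1 : R d) ^ (d - 1 - (p : ℕ)) * esym d (Finset.univ \ {j}) (d - 1 - (p : ℕ)) (x d))
        = (-β d) ^ r * ∑ p : Fin d,
            wq d j (d - 1 - (p : ℕ)) * Fcoeff d k (m p + (r : ℤ)) := by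
      rw [Finset.mul_sum]
      refine Finset.sum_congr rfl fun p _ => ?_
      rw [wq]
      ring
    rw [hsum]
    have hre : ∑ p : Fin d, wq d j (d - 1 - (p : ℕ)) * Fcoeff d k (m p + (r : ℤ))
        = ∑ q ∈ Finset.range d, wq d j q * Fcoeff d k (((k + (s + r) : ℕ) : ℤ) - q) := by
      have e1 : ∀ p : Fin d, wq d j (d - 1 - (p : ℕ)) * Fcoeff d k (m p + (r : ℤ))
          = wq d j (d - 1 - (p : ℕ)) *
              Fcoeff d k (((k + (s + r) : ℕ) : ℤ) - ((d - 1 - (p : ℕ) : ℕ) : ℤ)) := by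
        intro p
        have h1 := hm' p
        have h2 : m p + (r : ℤ) = ((k + (s + r) : ℕ) : ℤ) - ((d - 1 - (p : ℕ) : ℕ) : ℤ) := by
          push_cast at h1 ⊢
          omega
        rw [h2]
      rw [Finset.sum_congr rfl fun p _ => e1 p]
      rw [Fin.sum_univ_eq_sum_range
        (fun p => wq d j (d - 1 - p) * Fcoeff d k (((k + (s + r) : ℕ) : ℤ) - ((d - 1 - p : ℕ) : ℤ)))]
      exact Finset.sum_range_reflect
        (fun q => wq d j q * Fcoeff d k (((k + (s + r) : ℕ) : ℤ) - (q : ℤ))) d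
    rw [hre, key_row]
    rw [show x d j ^ (s + r) = x d j ^ s * x d j ^ r from pow_add _ _ _]
    ring
  rw [t2]
  rw [(seriesSum_mul_const (fun r => beta_pow_dvd_geom j r) _).symm]
  rw [seriesSum_geom]

end Row

/-- The `(i,j)`-entry of `H·M` equals `[x_j|b]^{a_i+d-i} (1+βx_j)^{i-d-1} ∏_t (1+βx_t)`. -/
theorem grothendieck_HM_entry
    (d : ℕ) (a : Fin d → ℤ) (ha : ∀ i : Fin d, 0 ≤ a i + d - ((i : ℕ) + 1)) (i j : Fin d) :
    (Matrix.of (fun i j : Fin d =>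
        seriesSum d fun s =>
          Ring.choose (((i : ℕ) : ℤ) + 1 - d) s •
            (β d ^ s * G d (a i + d - ((i : ℕ) + 1)).toNat (a i + (j : ℕ) - (i : ℕ) + s))) *
      Matrix.of (fun i j : Fin d =>
        (-1 : R d) ^ (d - 1 - (i : ℕ)) *
          esym d (Finset.univ \ {j}) (d - 1 - (i : ℕ)) (x d))) i j
      = fb d (x d j) (a i + d - ((i : ℕ) + 1)).toNat * invOneAdd d j ^ (d - (i : ℕ)) *
          ∏ t : Fin d, (1 + β d * x d t) := by
  classical
  have hipos : (i : ℕ) < d := i.isLt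
  set k : ℕ := (a i + d - ((i : ℕ) + 1)).toNat with hkdef
  have hkZ : (k : ℤ) = a i + d - ((i : ℕ) + 1) := Int.toNat_of_nonneg (ha i)
  set v : R d := x d j with hv
  set A : R d := ∏ t : Fin d, (1 + β d * x d t) with hA
  set inv : R d := invOneAdd d j with hinv
  set n0 : ℕ := d - 1 - (i : ℕ) with hn0
  have hc : (((i : ℕ) : ℤ) + 1 - d) = -((n0 : ℕ) : ℤ) := by
    simp only [hn0]; omega
  rw [Matrix.mul_apply]
  simp only [Matrix.of_apply]
  have t1 : ∀ p : Fin d,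
      (seriesSum d fun s =>
        Ring.choose (((i : ℕ) : ℤ) + 1 - d) s •
          (β d ^ s * G d k (a i + (p : ℕ) - (i : ℕ) + s)))
        * ((-1 : R d) ^ (d - 1 - (p : ℕ)) *
            esym d (Finset.univ \ {j}) (d - 1 - (p : ℕ)) (x d))
      = seriesSum d fun s =>
          (Ring.choose (((i : ℕ) : ℤ) + 1 - d) s •
            (β d ^ s * G d k (a i + (p : ℕ) - (i : ℕ) + s)))
          * ((-1 : R d) ^ (d - 1 - (p : ℕ)) *
              esym d (Finset.univ \ {j}) (d - 1 - (p : ℕ)) (x d)) := by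
    intro p
    exact seriesSum_mul_const (fun s => beta_pow_dvd_smul _ _ _) _
  rw [Finset.sum_congr rfl fun p _ => t1 p]
  rw [sum_seriesSum _ _ (fun p s => (beta_pow_dvd_smul _ _ _).mul_right _)]
  have t2 : (fun s => ∑ p : Fin d,
      (Ring.choose (((i : ℕ) : ℤ) + 1 - d) s •
        (β d ^ s * G d k (a i + (p : ℕ) - (i : ℕ) + s)))
      * ((-1 : R d) ^ (d - 1 - (p : ℕ)) *
          esym d (Finset.univ \ {j}) (d - 1 - (p : ℕ)) (x d)))
      = fun s => (Ring.choose (-((n0 : ℕ) : ℤ)) s • (β d * v) ^ s) * (inv * (A * fb d v k)) := by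
    funext s
    have hrow := row_G (d := d) k s j (fun p => a i + (p : ℕ) - (i : ℕ) + s) ?_
    · rw [(Finset.sum_congr rfl fun p _ => by
          rw [smul_mul_assoc, mul_assoc] :
          (∑ p : Fin d, (Ring.choose (((i : ℕ) : ℤ) + 1 - d) s •
            (β d ^ s * G d k (a i + (p : ℕ) - (i : ℕ) + s)))
            * ((-1 : R d) ^ (d - 1 - (p : ℕ)) *
                esym d (Finset.univ \ {j}) (d - 1 - (p : ℕ)) (x d)))
          = ∑ p : Fin d, Ring.choose (((i : ℕ) : ℤ) + 1 - d) s •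
              (β d ^ s * (G d k (a i + (p : ℕ) - (i : ℕ) + s) *
                ((-1 : R d) ^ (d - 1 - (p : ℕ)) *
                  esym d (Finset.univ \ {j}) (d - 1 - (p : ℕ)) (x d)))))]
      rw [← Finset.smul_sum, ← Finset.mul_sum, hrow, hc]
      rw [show β d ^ s * (inv * (v ^ s * (A * fb d v k)))
          = (β d * v) ^ s * (inv * (A * fb d v k)) from by rw [mul_pow]; ring]
      rw [smul_mul_assoc]
    · intro p
      have hp : (p : ℕ) < d := p.isLt
      push_cast
      rw [hkZ]
      push_cast
      omega
  rw [t2]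
  rw [(seriesSum_mul_const (fun s => beta_pow_dvd_choose j _ s) _).symm]
  rw [seriesSum_choose]
  have hd : d - (i : ℕ) = n0 + 1 := by omega
  rw [hd, pow_succ]
  ring

end GrothDet
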